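/- Under the identification of the Clifford torus T_ρ with R²/Z² via φ(x,y)=(ρ e^{2πix}, √(1−ρ²) e^{2πiy}), a geodesic of curvature λ=(2ρ²−1)/(2ρ√(1−ρ²)) contained in T_ρ corresponds to a straight line of slope m = ((λ/√(1+λ²))+1)/((λ/√(1+λ²))−1). -/

import Mathlib

open Real
open scoped RealInnerProductSpace

def qi : Quaternion ℝ := ⟨0, 1, 0, 0⟩

/-- The standard flat parameterization `φ : ℝ²/ℤ² → T_ρ`,
`φ(x,y) = (ρ e^{2πix}, √(1−ρ²) e^{2πiy})`. -/
noncomputable def phiT (ρ x y : ℝ) : Quaternion ℝ :=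
  ⟨ρ * Real.cos (2 * π * x), ρ * Real.sin (2 * π * x),
    Real.sqrt (1 - ρ ^ 2) * Real.cos (2 * π * y),
    Real.sqrt (1 - ρ ^ 2) * Real.sin (2 * π * y)⟩

def qmk (a b c d : ℝ) : Quaternion ℝ := ⟨a, b, c, d⟩

@[simp] lemma qmk_re (a b c d : ℝ) : (qmk a b c d).re = a := rfl
@[simp] lemma qmk_imI (a b c d : ℝ) : (qmk a b c d).imI = b := rfl
@[simp] lemma qmk_imJ (a b c d : ℝ) : (qmk a b c d).imJ = c := rfl
@[simp] lemma qmk_imK (a b c d : ℝ) : (qmk a b c d).imK = d := rfl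

@[simp] lemma qi_re : qi.re = 0 := rfl
@[simp] lemma qi_imI : qi.imI = 1 := rfl
@[simp] lemma qi_imJ : qi.imJ = 0 := rfl
@[simp] lemma qi_imK : qi.imK = 0 := rfl

@[simp] lemma phiT_re (ρ x y : ℝ) : (phiT ρ x y).re = ρ * Real.cos (2*π*x) := rfl
@[simp] lemma phiT_imI (ρ x y : ℝ) : (phiT ρ x y).imI = ρ * Real.sin (2*π*x) := rfl
@[simp] lemma phiT_imJ (ρ x y : ℝ) : (phiT ρ x y).imJ = Real.sqrt (1-ρ^2) * Real.cos (2*π*y) := rfl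
@[simp] lemma phiT_imK (ρ x y : ℝ) : (phiT ρ x y).imK = Real.sqrt (1-ρ^2) * Real.sin (2*π*y) := rfl

lemma qi_mul (w : Quaternion ℝ) : qi * w = qmk (-w.imI) w.re (-w.imK) w.imJ := by
  ext <;> simp [Quaternion.re_mul, Quaternion.imI_mul, Quaternion.imJ_mul, Quaternion.imK_mul]

lemma inner_quat (a b : Quaternion ℝ) :
    ⟪a, b⟫ = a.re*b.re + a.imI*b.imI + a.imJ*b.imJ + a.imK*b.imK := by
  rw [Quaternion.inner_def]
  simp [Quaternion.re_mul]

lemma quat_comp_deriv {f g h k : ℝ → ℝ} {f' g' h' k' : ℝ} {s : ℝ}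
    (hf : HasDerivAt f f' s) (hg : HasDerivAt g g' s) (hh : HasDerivAt h h' s)
    (hk : HasDerivAt k k' s) :
    HasDerivAt (fun t => qmk (f t) (g t) (h t) (k t)) (qmk f' g' h' k') s := by
  have key : (fun t => qmk (f t) (g t) (h t) (k t))
      = fun t => f t • qmk 1 0 0 0 + g t • qmk 0 1 0 0
        + h t • qmk 0 0 1 0 + k t • qmk 0 0 0 1 := by
    funext t; ext <;> simp [Quaternion.re_smul]
  rw [key]
  have h1 := (((hf.smul_const (qmk 1 0 0 0)).add
      (hg.smul_const (qmk 0 1 0 0))).add (hh.smul_const (qmk 0 0 1 0))).add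
      (hk.smul_const (qmk 0 0 0 1))
  refine h1.congr_deriv ?_
  ext <;> simp [Quaternion.re_smul]

lemma hasDerivAt_mul_cos (c a A s : ℝ) :
    HasDerivAt (fun t => c * Real.cos (a*t+A)) (-(c*a) * Real.sin (a*s+A)) s := by
  have h := ((((hasDerivAt_id s).const_mul a).add_const A).cos).const_mul c
  refine h.congr_deriv ?_
  simp; ring

lemma hasDerivAt_mul_sin (c a A s : ℝ) :
    HasDerivAt (fun t => c * Real.sin (a*t+A)) ((c*a) * Real.cos (a*s+A)) s := by
  have h := ((((hasDerivAt_id s).const_mul a).add_const A).sin).const_mul c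
  refine h.congr_deriv ?_
  simp; ring

set_option maxHeartbeats 2000000 in
/-- Under the identification of the Clifford torus `T_ρ` with `ℝ²/ℤ²` via `φ`, a
geodesic of curvature `λ = (2ρ²−1)/(2ρ√(1−ρ²))` contained in `T_ρ` is the
straight line `s ↦ ((√(1+λ²)−λ)s/2π + θ, −(λ+√(1+λ²))s/2π + θ')`, whose slope
equals `m = ((λ/√(1+λ²))+1)/((λ/√(1+λ²))−1)`. -/
theorem geodesic_is_line_in_torus (ρ lam θ θ' : ℝ) (hρ : ρ ∈ Set.Ioo (0:ℝ) 1)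
    (hlam : lam = (2 * ρ ^ 2 - 1) / (2 * ρ * Real.sqrt (1 - ρ ^ 2)))
    (γ γ' γ'' : ℝ → Quaternion ℝ)
    (hγ0 : γ 0 = phiT ρ θ θ')
    (hγ'0 : γ' 0 = qi * ⟨Real.sqrt (1 - ρ ^ 2) / ρ * (γ 0).re,
        Real.sqrt (1 - ρ ^ 2) / ρ * (γ 0).imI,
        -((γ 0).imJ * (ρ / Real.sqrt (1 - ρ ^ 2))),
        -((γ 0).imK * (ρ / Real.sqrt (1 - ρ ^ 2)))⟩)
    (hd1 : ∀ s, HasDerivAt γ (γ' s) s) (hd2 : ∀ s, HasDerivAt γ' (γ'' s) s)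
    (heq : ∀ s, γ'' s + γ s + (2 * lam) • (qi * γ' s) = 0) :
    (∀ s : ℝ, γ s = phiT ρ ((Real.sqrt (1 + lam ^ 2) - lam) * s / (2 * π) + θ)
        (-(lam + Real.sqrt (1 + lam ^ 2)) * s / (2 * π) + θ')) ∧
    (-(lam + Real.sqrt (1 + lam ^ 2)) / (Real.sqrt (1 + lam ^ 2) - lam) =
      (lam / Real.sqrt (1 + lam ^ 2) + 1) / (lam / Real.sqrt (1 + lam ^ 2) - 1)) := by
  obtain ⟨hρ0, hρ1⟩ := hρ
  set r : ℝ := Real.sqrt (1 - ρ ^ 2) with hr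
  have hr2 : r ^ 2 = 1 - ρ ^ 2 := Real.sq_sqrt (by nlinarith)
  have hrpos : 0 < r := Real.sqrt_pos.mpr (by nlinarith)
  set L : ℝ := Real.sqrt (1 + lam ^ 2) with hL
  have hL2 : L ^ 2 = 1 + lam ^ 2 := Real.sq_sqrt (by positivity)
  have hLpos : 0 < L := Real.sqrt_pos.mpr (by positivity)
  have hLval : L = 1 / (2 * ρ * r) := by
    rw [hL, hlam]
    rw [show 1 + ((2 * ρ ^ 2 - 1) / (2 * ρ * r)) ^ 2 = (1/(2*ρ*r))^2 by
      field_simp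
      try ring
      try tauto
      nlinarith [hr2]]
    rw [Real.sqrt_sq (by positivity)]
  set a : ℝ := L - lam with ha
  set b : ℝ := -(lam + L) with hb
  have ha' : a = r / ρ := by
    rw [ha, hLval, hlam]; field_simp; nlinarith [hr2]
  have hb' : b = -(ρ / r) := by
    rw [hb, hLval, hlam]; field_simp; nlinarith [hr2]
  have haq : a ^ 2 + 2 * lam * a - 1 = 0 := by rw [ha]; nlinarith [hL2]
  have hbq : b ^ 2 + 2 * lam * b - 1 = 0 := by rw [hb]; nlinarith [hL2]
  set A : ℝ := 2 * π * θ with hA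
  set B : ℝ := 2 * π * θ' with hB
  set c : ℝ → Quaternion ℝ := fun s =>
    qmk (ρ * Real.cos (a*s+A)) (ρ * Real.sin (a*s+A)) (r * Real.cos (b*s+B)) (r * Real.sin (b*s+B))
    with hc
  set c1 : ℝ → Quaternion ℝ := fun s =>
    qmk (-(ρ*a) * Real.sin (a*s+A)) ((ρ*a) * Real.cos (a*s+A))
      (-(r*b) * Real.sin (b*s+B)) ((r*b) * Real.cos (b*s+B)) with hc1
  have hdc : ∀ s, HasDerivAt c (c1 s) s := fun s =>
    quat_comp_deriv (hasDerivAt_mul_cos ρ a A s) (hasDerivAt_mul_sin ρ a A s)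
      (hasDerivAt_mul_cos r b B s) (hasDerivAt_mul_sin r b B s)
  -- c1 has derivative satisfying the ODE
  have hdc1 : ∀ s, HasDerivAt c1 (-(c s) - (2*lam) • (qi * c1 s)) s := by
    intro s
    have h1 := hasDerivAt_mul_sin (-(ρ*a)) a A s
    have h2 := hasDerivAt_mul_cos (ρ*a) a A s
    have h3 := hasDerivAt_mul_sin (-(r*b)) b B s
    have h4 := hasDerivAt_mul_cos (r*b) b B s
    have key := quat_comp_deriv h1 h2 h3 h4
    convert key using 1
    simp only [hc, hc1]
    ext
    · simp only [Quaternion.re_sub, Quaternion.re_neg, Quaternion.re_smul, Quaternion.re_mul,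
        qi_re, qi_imI, qi_imJ, qi_imK, qmk_re, qmk_imI, qmk_imJ, qmk_imK, smul_eq_mul]
      linear_combination (ρ * Real.cos (a*s+A)) * haq
    · simp only [Quaternion.imI_sub, Quaternion.imI_neg, Quaternion.imI_smul, Quaternion.imI_mul,
        qi_re, qi_imI, qi_imJ, qi_imK, qmk_re, qmk_imI, qmk_imJ, qmk_imK, smul_eq_mul]
      linear_combination (ρ * Real.sin (a*s+A)) * haq
    · simp only [Quaternion.imJ_sub, Quaternion.imJ_neg, Quaternion.imJ_smul, Quaternion.imJ_mul,
        qi_re, qi_imI, qi_imJ, qi_imK, qmk_re, qmk_imI, qmk_imJ, qmk_imK, smul_eq_mul]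
      linear_combination (r * Real.cos (b*s+B)) * hbq
    · simp only [Quaternion.imK_sub, Quaternion.imK_neg, Quaternion.imK_smul, Quaternion.imK_mul,
        qi_re, qi_imI, qi_imJ, qi_imK, qmk_re, qmk_imI, qmk_imJ, qmk_imK, smul_eq_mul]
      linear_combination (r * Real.sin (b*s+B)) * hbq
  -- γ'' in solved form
  have hγODE : ∀ s, γ'' s = -(γ s) - (2*lam) • (qi * γ' s) := by
    intro s
    have h := heq s
    have h2 : γ'' s + (γ s + (2*lam) • (qi * γ' s)) = 0 := by rw [← add_assoc]; exact h
    have h3 := eq_neg_of_add_eq_zero_left h2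
    rw [h3]; abel
  -- derivatives of differences
  have hδd : ∀ s, HasDerivAt (fun t => γ t - c t) (γ' s - c1 s) s :=
    fun s => (hd1 s).sub (hdc s)
  have hδ'd : ∀ s, HasDerivAt (fun t => γ' t - c1 t)
      (-(γ s - c s) - (2*lam) • (qi * (γ' s - c1 s))) s := by
    intro s
    have h := (hd2 s).sub (hdc1 s)
    refine h.congr_deriv ?_
    rw [hγODE s]
    simp only [mul_sub, smul_sub]
    abel
  -- energy is constant
  have hE : ∀ t, HasDerivAt (fun u => (⟪γ u - c u, γ u - c u⟫ : ℝ)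
      + ⟪γ' u - c1 u, γ' u - c1 u⟫) 0 t := by
    intro t
    have h1 := HasDerivAt.inner ℝ (hδd t) (hδd t)
    have h2 := HasDerivAt.inner ℝ (hδ'd t) (hδ'd t)
    have h := h1.add h2
    refine h.congr_deriv ?_
    simp only [inner_quat, Quaternion.re_sub, Quaternion.imI_sub, Quaternion.imJ_sub,
      Quaternion.imK_sub, Quaternion.re_neg, Quaternion.imI_neg, Quaternion.imJ_neg,
      Quaternion.imK_neg, Quaternion.re_smul, Quaternion.imI_smul, Quaternion.imJ_smul,
      Quaternion.imK_smul, Quaternion.re_mul, Quaternion.imI_mul, Quaternion.imJ_mul,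
      Quaternion.imK_mul, qi_re, qi_imI, qi_imJ, qi_imK, smul_eq_mul]
    ring
  have hconst : ∀ sx : ℝ, ((⟪γ sx - c sx, γ sx - c sx⟫ : ℝ)
      + ⟪γ' sx - c1 sx, γ' sx - c1 sx⟫)
      = (⟪γ 0 - c 0, γ 0 - c 0⟫ : ℝ) + ⟪γ' 0 - c1 0, γ' 0 - c1 0⟫ :=
    fun sx => is_const_of_deriv_eq_zero (fun t => (hE t).differentiableAt)
      (fun t => (hE t).deriv) sx 0
  -- initial conditions
  have hc0 : c 0 = γ 0 := by
    rw [hγ0]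
    simp only [hc]
    ext <;> simp [qmk, phiT, hA, hB, hr]
  have hc10 : c1 0 = γ' 0 := by
    rw [hγ'0, hγ0, qi_mul (⟨_, _, _, _⟩ : Quaternion ℝ)]
    simp only [hc1]
    ext
    · simp only [qmk_re, qmk_imI, qmk_imJ, qmk_imK, phiT_re, phiT_imI, phiT_imJ, phiT_imK,
        mul_zero, zero_add, ← hA, ← hB, ← hr, ha']
      field_simp
      try ring
      try tauto
    · simp only [qmk_re, qmk_imI, qmk_imJ, qmk_imK, phiT_re, phiT_imI, phiT_imJ, phiT_imK,
        mul_zero, zero_add, ← hA, ← hB, ← hr, ha']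
      field_simp
      try ring
      try tauto
    · simp only [qmk_re, qmk_imI, qmk_imJ, qmk_imK, phiT_re, phiT_imI, phiT_imJ, phiT_imK,
        mul_zero, zero_add, ← hA, ← hB, ← hr, hb', neg_neg]
      field_simp
      try ring
      try tauto
    · simp only [qmk_re, qmk_imI, qmk_imJ, qmk_imK, phiT_re, phiT_imI, phiT_imJ, phiT_imK,
        mul_zero, zero_add, ← hA, ← hB, ← hr, hb', neg_neg]
      field_simp
      try ring
      try tauto
  have hzero : ∀ sx : ℝ, ((⟪γ sx - c sx, γ sx - c sx⟫ : ℝ)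
      + ⟪γ' sx - c1 sx, γ' sx - c1 sx⟫) = 0 := by
    intro sx
    rw [hconst sx, hc0, hc10]
    simp
  constructor
  · intro s
    have h1 : (⟪γ s - c s, γ s - c s⟫ : ℝ) = 0 := by
      have := hzero s
      have n1 : (0:ℝ) ≤ ⟪γ s - c s, γ s - c s⟫ := real_inner_self_nonneg
      have n2 : (0:ℝ) ≤ ⟪γ' s - c1 s, γ' s - c1 s⟫ := real_inner_self_nonneg
      linarith
    have h2 : γ s = c s := sub_eq_zero.mp (inner_self_eq_zero.mp h1)
    rw [h2]
    simp only [hc]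
    have e1 : 2*π*(a * s/(2*π)+θ) = a*s+A := by rw [hA]; field_simp
    have e2 : 2*π*(b * s/(2*π)+θ') = b*s+B := by rw [hB]; field_simp
    ext <;> simp [qmk, phiT, e1, e2, hr]
  · have halam : lam < L := by nlinarith [hL2, hLpos]
    have h1 : a ≠ 0 := by rw [ha]; intro h; nlinarith
    have h2 : lam / L - 1 ≠ 0 := by
      have : lam / L < 1 := (div_lt_one hLpos).mpr halam
      intro h; nlinarith
    rw [ha, hb]
    rw [ha] at h1
    have h4 : lam - L ≠ 0 := fun h => h1 (by linarith)
    have h5 : -L + lam ≠ 0 := fun h => h1 (by linarith)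
    have hLne : L ≠ 0 := ne_of_gt hLpos
    field_simp
    ring
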